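/- Let g_n ∈ PSL(2, ℝ) be a sequence of hyperbolic elements whose translation lengths ℓ_n tend to 0, whose axes converge to a geodesic γ, and such that the elements g_n converge to the identity. Then, after passing to a subsequence, the geometric limit of the cyclic groups ⟨g_n⟩ is either the full one-parameter hyperbolic group with axis γ, or a discrete infinite cyclic group of hyperbolic elements with axis γ. -/

import Mathlib

open Matrix Filter Topology Set

noncomputable section

abbrev SL2R := Matrix.SpecialLinearGroup (Fin 2) ℝ
abbrev PSL2R := Matrix.ProjectiveSpecialLinearGroup (Fin 2) ℝ

instance : TopologicalSpace SL2R :=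
  TopologicalSpace.induced (fun A => (A : Matrix (Fin 2) (Fin 2) ℝ)) inferInstance

instance : IsTopologicalGroup SL2R where
  continuous_mul := continuous_induced_rng.mpr <| by
    exact ((continuous_induced_dom.comp continuous_fst).matrix_mul
      (continuous_induced_dom.comp continuous_snd))
  continuous_inv := continuous_induced_rng.mpr <| by
    have : Continuous fun A : SL2R => ((A : Matrix (Fin 2) (Fin 2) ℝ)).adjugate :=
      continuous_induced_dom.matrix_adjugate
    simpa [Matrix.SpecialLinearGroup.coe_inv]


/-- The Chabauty–Fell topology on the powerset of `X`. -/
def ChabautyFell (X : Type*) [TopologicalSpace X] : TopologicalSpace (Set X) :=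
  TopologicalSpace.generateFrom
    ({S | ∃ K : Set X, IsCompact K ∧ S = {A : Set X | A ∩ K = ∅}} ∪
     {S | ∃ U : Set X, IsOpen U ∧ S = {A : Set X | (A ∩ U).Nonempty}})

/-- Whether a boundary point `p ∈ ℝ ∪ {∞}` is fixed by the Möbius transformation of `A`. -/
def bFixed (A : SL2R) (p : OnePoint ℝ) : Prop :=
  OnePoint.rec (A 1 0 = 0)
    (fun x => A 1 0 * x ^ 2 + (A 1 1 - A 0 0) * x - A 0 1 = 0) p

/-- The subgroup of `PSL(2, ℝ)` of elements fixing both boundary points `p` and `q`;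
for `p ≠ q` this is exactly the full one-parameter hyperbolic group whose axis is the
geodesic `γ` with endpoints `p` and `q` (together with the identity). -/
def Stab (p q : OnePoint ℝ) : Set PSL2R :=
  {x : PSL2R | ∃ A : SL2R, (QuotientGroup.mk A : PSL2R) = x ∧ bFixed A p ∧ bFixed A q}

namespace Stmt9Aux

abbrev Mat := Matrix (Fin 2) (Fin 2) ℝ

def bFixedM (M : Mat) (p : OnePoint ℝ) : Prop :=
  OnePoint.rec (M 1 0 = 0)
    (fun x => M 1 0 * x ^ 2 + (M 1 1 - M 0 0) * x - M 0 1 = 0) p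

lemma bFixed_iff (C : SL2R) (p : OnePoint ℝ) : bFixed C p ↔ bFixedM (C : Mat) p := Iff.rfl

lemma bFixedM_infty {M : Mat} : bFixedM M (OnePoint.infty) ↔ M 1 0 = 0 := Iff.rfl

lemma bFixedM_coe {M : Mat} {x : ℝ} :
    bFixedM M (x : OnePoint ℝ) ↔ M 1 0 * x ^ 2 + (M 1 1 - M 0 0) * x - M 0 1 = 0 := Iff.rfl

/-- `bFixedM` only depends on the three "Möbius coefficients", linearly. -/
lemma bFixedM_of_proportional {M N : Mat} {p : OnePoint ℝ} (c : ℝ)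
    (h10 : M 1 0 = c * N 1 0) (hd : M 1 1 - M 0 0 = c * (N 1 1 - N 0 0))
    (h01 : M 0 1 = c * N 0 1) (h : bFixedM N p) : bFixedM M p := by
  induction p using OnePoint.rec with
  | infty => rw [bFixedM_infty] at h ⊢; rw [h10, h, mul_zero]
  | coe x =>
    rw [bFixedM_coe] at h ⊢
    rw [h10, hd, h01]
    linear_combination c * h

lemma bFixedM_neg {M : Mat} {p : OnePoint ℝ} (h : bFixedM M p) : bFixedM (-M) p := by
  refine bFixedM_of_proportional (-1) ?_ ?_ ?_ h <;> simp <;> ring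

def wedge (v w : Fin 2 → ℝ) : ℝ := v 0 * w 1 - v 1 * w 0

def numMat (v w : Fin 2 → ℝ) : Mat :=
  !![v 0 * w 1 + v 1 * w 0, -(2 * (v 0 * w 0)); 2 * (v 1 * w 1), -(v 0 * w 1 + v 1 * w 0)]

def MatG (v w : Fin 2 → ℝ) : Mat := (wedge v w)⁻¹ • numMat v w

def vp : OnePoint ℝ → Fin 2 → ℝ := fun p => OnePoint.rec ![1, 0] (fun x => ![x, 1]) p

def Gm (p q : OnePoint ℝ) : Mat := MatG (vp p) (vp q)

lemma vp_infty : vp (OnePoint.infty) = ![1, 0] := rfl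
lemma vp_coe (x : ℝ) : vp (x : OnePoint ℝ) = ![x, 1] := rfl

@[simp] lemma MatG_apply_00 (v w : Fin 2 → ℝ) :
    MatG v w 0 0 = (wedge v w)⁻¹ * (v 0 * w 1 + v 1 * w 0) := by
  simp [MatG, numMat]
@[simp] lemma MatG_apply_01 (v w : Fin 2 → ℝ) :
    MatG v w 0 1 = (wedge v w)⁻¹ * -(2 * (v 0 * w 0)) := by
  simp [MatG, numMat]
@[simp] lemma MatG_apply_10 (v w : Fin 2 → ℝ) :
    MatG v w 1 0 = (wedge v w)⁻¹ * (2 * (v 1 * w 1)) := by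
  simp [MatG, numMat]
@[simp] lemma MatG_apply_11 (v w : Fin 2 → ℝ) :
    MatG v w 1 1 = (wedge v w)⁻¹ * -(v 0 * w 1 + v 1 * w 0) := by
  simp [MatG, numMat]

lemma MatG_trace (v w : Fin 2 → ℝ) : MatG v w 1 1 = -(MatG v w 0 0) := by
  simp [mul_comm]; ring

lemma MatG_det {v w : Fin 2 → ℝ} (h : wedge v w ≠ 0) : (MatG v w).det = -1 := by
  rw [Matrix.det_fin_two]
  simp only [MatG_apply_00, MatG_apply_01, MatG_apply_10, MatG_apply_11]
  have : wedge v w * wedge v w ≠ 0 := mul_ne_zero h h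
  field_simp [wedge] at this ⊢
  simp only [wedge]
  ring

lemma wedge_swap (v w : Fin 2 → ℝ) : wedge w v = -wedge v w := by simp [wedge]; ring

lemma numMat_swap (v w : Fin 2 → ℝ) : numMat w v = numMat v w := by
  ext i j; fin_cases i <;> fin_cases j <;> simp [numMat] <;> ring

lemma MatG_swap (v w : Fin 2 → ℝ) : MatG w v = -MatG v w := by
  rw [MatG, MatG, wedge_swap, numMat_swap, inv_neg, neg_smul]

lemma MatG_fixed_coe (w : Fin 2 → ℝ) (x : ℝ) : bFixedM (MatG ![x, 1] w) (x : OnePoint ℝ) := by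
  rw [bFixedM_coe]
  simp
  ring

lemma MatG_fixed_infty (w : Fin 2 → ℝ) : bFixedM (MatG ![1, 0] w) (OnePoint.infty) := by
  rw [bFixedM_infty]
  simp

lemma wedge_smul_left (v w : Fin 2 → ℝ) (c : ℝ) : wedge (c • v) w = c * wedge v w := by
  simp [wedge]; ring

lemma numMat_smul_left (v w : Fin 2 → ℝ) (c : ℝ) : numMat (c • v) w = c • numMat v w := by
  ext i j; fin_cases i <;> fin_cases j <;> simp [numMat] <;> ring

lemma MatG_smul_left (v w : Fin 2 → ℝ) {c : ℝ} (hc : c ≠ 0) : MatG (c • v) w = MatG v w := by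
  rw [MatG, MatG, wedge_smul_left, numMat_smul_left, mul_inv, smul_smul,
    mul_comm c⁻¹ (wedge v w)⁻¹, mul_assoc, inv_mul_cancel₀ hc, mul_one]

lemma MatG_smul_right (v w : Fin 2 → ℝ) {c : ℝ} (hc : c ≠ 0) : MatG v (c • w) = MatG v w := by
  calc MatG v (c • w) = -MatG (c • w) v := MatG_swap (c • w) v
    _ = -MatG w v := by rw [MatG_smul_left _ _ hc]
    _ = MatG v w := by rw [MatG_swap v w, neg_neg]

lemma Gm_trace (p q : OnePoint ℝ) : Gm p q 1 1 = -(Gm p q 0 0) := MatG_trace _ _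

lemma vp_ne_infty_coe (y : ℝ) : wedge (vp (OnePoint.infty)) (vp (y : OnePoint ℝ)) = 1 := by
  simp [wedge, vp_infty, vp_coe]

lemma wedge_vp_ne {p q : OnePoint ℝ} (h : p ≠ q) : wedge (vp p) (vp q) ≠ 0 := by
  induction p using OnePoint.rec with
  | infty =>
    induction q using OnePoint.rec with
    | infty => exact absurd rfl h
    | coe y => simp [wedge, vp_infty, vp_coe]
  | coe x =>
    induction q using OnePoint.rec with
    | infty => simp [wedge, vp_infty, vp_coe]
    | coe y =>
      have : x ≠ y := fun hxy => h (by rw [hxy])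
      simp [wedge, vp_infty, vp_coe, sub_ne_zero.mpr this]

lemma Gm_det {p q : OnePoint ℝ} (h : p ≠ q) : (Gm p q).det = -1 :=
  MatG_det (wedge_vp_ne h)

lemma Gm_fixed_fst {p q : OnePoint ℝ} (h : p ≠ q) : bFixedM (Gm p q) p := by
  induction p using OnePoint.rec with
  | infty => exact MatG_fixed_infty _
  | coe x => exact MatG_fixed_coe _ x

lemma Gm_fixed_snd {p q : OnePoint ℝ} (h : p ≠ q) : bFixedM (Gm p q) q := by
  have : Gm p q = -(Gm q p) := MatG_swap _ _
  rw [this]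
  apply bFixedM_neg
  induction q using OnePoint.rec with
  | infty => exact MatG_fixed_infty _
  | coe x => exact MatG_fixed_coe _ x

lemma Gm_infty_coe (y : ℝ) : Gm (OnePoint.infty) (y : OnePoint ℝ) = !![1, -(2*y); 0, -1] := by
  ext i j
  fin_cases i <;> fin_cases j <;> simp [Gm, MatG, numMat, wedge, vp_infty, vp_coe]

lemma Gm_coe_coe (x y : ℝ) :
    Gm (x : OnePoint ℝ) (y : OnePoint ℝ) = (x - y)⁻¹ • !![x + y, -(2*(x*y)); 2, -(x+y)] := by
  ext i j
  fin_cases i <;> fin_cases j <;> simp [Gm, MatG, numMat, wedge, vp_infty, vp_coe] <;> ring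

/-- uniqueness: a traceless matrix of determinant `-1` fixing two distinct boundary
points is `± Gm p q`. -/
lemma traceless_unique {N : Mat} {p q : OnePoint ℝ} (hpq : p ≠ q)
    (htr : N 1 1 = -N 0 0) (hdet : N.det = -1)
    (hp : bFixedM N p) (hq : bFixedM N q) : N = Gm p q ∨ N = -Gm p q := by
  have hN4 : N = !![N 0 0, N 0 1; N 1 0, -(N 0 0)] := by
    rw [← htr]; exact Matrix.eta_fin_two N
  set g := N 0 0 with hg
  set h := N 0 1 with hh
  set c := N 1 0 with hc
  have hdet' : -(g*g) - h*c = -1 := by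
    have := Matrix.det_fin_two N
    rw [hdet, htr] at this
    linear_combination -this
  induction p using OnePoint.rec with
  | infty =>
    have hc0 : c = 0 := hp
    induction q using OnePoint.rec with
    | infty => exact absurd rfl hpq
    | coe y =>
      have hyq : c * y^2 + (-g - g) * y - h = 0 := by
        have := hq; rw [bFixedM_coe, htr] at this; exact this
      have hg2 : g*g = 1 := by rw [hc0] at hdet'; linarith
      have : (g-1)*(g+1) = 0 := by ring_nf; linarith [hg2]
      rw [Gm_infty_coe]
      rcases mul_eq_zero.mp this with h1 | h1
      · left
        have hg1 : g = 1 := by linarith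
        have hhy : h = -(2*y) := by rw [hc0, hg1] at hyq; linarith
        rw [hN4, hg1, hhy, hc0]
      · right
        have hg1 : g = -1 := by linarith
        have hhy : h = 2*y := by rw [hc0, hg1] at hyq; linarith
        rw [hN4, hg1, hhy, hc0]
        ext i j; fin_cases i <;> fin_cases j <;> simp
  | coe x =>
    induction q using OnePoint.rec with
    | infty =>
      have hc0 : c = 0 := hq
      have hxq : c * x^2 + (-g - g) * x - h = 0 := by
        have := hp; rw [bFixedM_coe, htr] at this; exact this
      have hg2 : g*g = 1 := by rw [hc0] at hdet'; linarith
      have : (g-1)*(g+1) = 0 := by ring_nf; linarith [hg2]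
      have hswap : Gm (x : OnePoint ℝ) (OnePoint.infty) = -Gm (OnePoint.infty) (x : OnePoint ℝ) :=
        MatG_swap _ _
      rw [hswap, Gm_infty_coe]
      rcases mul_eq_zero.mp this with h1 | h1
      · right
        have hg1 : g = 1 := by linarith
        have hhy : h = -(2*x) := by rw [hc0, hg1] at hxq; linarith
        rw [hN4, hg1, hhy, hc0, neg_neg]
      · left
        have hg1 : g = -1 := by linarith
        have hhy : h = 2*x := by rw [hc0, hg1] at hxq; linarith
        rw [hN4, hg1, hhy, hc0]
        ext i j; fin_cases i <;> fin_cases j <;> simp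
    | coe y =>
      have hxy : x ≠ y := fun hxy => hpq (by rw [hxy])
      have hxy' : x - y ≠ 0 := sub_ne_zero.mpr hxy
      have hx : c * x^2 + (-g - g) * x - h = 0 := by
        have := hp; rw [bFixedM_coe, htr] at this; exact this
      have hy : c * y^2 + (-g - g) * y - h = 0 := by
        have := hq; rw [bFixedM_coe, htr] at this; exact this
      have key1 : c * (x + y) = 2 * g := by
        have hfac : (x - y) * (c * (x + y) - 2 * g) = 0 := by linear_combination hx - hy
        have := (mul_eq_zero.mp hfac).resolve_left hxy'
        linarith
      have key2 : h = -(c * (x * y)) := by linear_combination -hx + x * key1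
      have hdet2 : (c * (x - y)) * (c * (x - y)) = 4 := by
        linear_combination (-4)*hdet' + (c*(x+y) + 2*g)*key1 + (-(4*c))*key2
      have : (c * (x-y) - 2) * (c * (x-y) + 2) = 0 := by ring_nf; linarith [hdet2]
      rw [Gm_coe_coe]
      rcases mul_eq_zero.mp this with h1 | h1
      · left
        have hcv : c = 2 * (x-y)⁻¹ := by field_simp; linarith
        have hgv : g = (x + y) * (x-y)⁻¹ := by
          rw [hcv] at key1; field_simp at key1 ⊢; linarith
        have hhv : h = -(2*(x*y)*(x-y)⁻¹) := by rw [key2, hcv]; ring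
        rw [hN4, hgv, hhv, hcv]
        ext i j
        fin_cases i <;> fin_cases j <;> (simp [smul_eq_mul]; try ring)
      · right
        have hcv : c = -(2 * (x-y)⁻¹) := by field_simp; linarith
        have hgv : g = -((x + y) * (x-y)⁻¹) := by
          rw [hcv] at key1; field_simp at key1 ⊢; linarith
        have hhv : h = 2*(x*y)*(x-y)⁻¹ := by rw [key2, hcv]; ring
        rw [hN4, hgv, hhv, hcv]
        ext i j
        fin_cases i <;> fin_cases j <;> (simp [smul_eq_mul]; try ring)

/-- a nonzero traceless matrix fixing two distinct boundary points has negative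
determinant. -/
lemma traceless_detneg {N : Mat} {p q : OnePoint ℝ} (hpq : p ≠ q)
    (htr : N 1 1 = -N 0 0) (hN : N ≠ 0)
    (hp : bFixedM N p) (hq : bFixedM N q) : N.det < 0 := by
  have hN4 : N = !![N 0 0, N 0 1; N 1 0, -(N 0 0)] := by
    rw [← htr]; exact Matrix.eta_fin_two N
  set g := N 0 0 with hg
  set h := N 0 1 with hh
  set c := N 1 0 with hc
  have hdet' : N.det = -(g*g) - h*c := by
    have := Matrix.det_fin_two N
    rw [htr] at this
    linarith [this]
  -- helper : if (g, h, c) = 0 then N = 0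
  have hzero : g = 0 → h = 0 → c = 0 → False := by
    intro h1 h2 h3
    apply hN
    rw [hN4, h1, h2, h3]
    ext i j; fin_cases i <;> fin_cases j <;> simp
  -- reduce both boundary fixed points
  have main : ∀ (x : ℝ), bFixedM N (x : OnePoint ℝ) → c * x^2 + (-g - g) * x - h = 0 := by
    intro x hx; have := hx; rw [bFixedM_coe, htr] at this; exact this
  induction p using OnePoint.rec with
  | infty =>
    have hc0 : c = 0 := hp
    induction q using OnePoint.rec with
    | infty => exact absurd rfl hpq
    | coe y =>
      have h1 := main y hq
      rw [hc0] at h1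
      have hgne : g ≠ 0 := by
        intro hg0
        exact hzero hg0 (by rw [hg0] at h1; linarith) hc0
      rw [hdet', hc0]
      nlinarith [mul_self_pos.mpr hgne]
  | coe x =>
    have h1 := main x hp
    induction q using OnePoint.rec with
    | infty =>
      have hc0 : c = 0 := hq
      rw [hc0] at h1
      have hgne : g ≠ 0 := by
        intro hg0
        exact hzero hg0 (by rw [hg0] at h1; linarith) hc0
      rw [hdet', hc0]
      nlinarith [mul_self_pos.mpr hgne]
    | coe y =>
      have hxy : x ≠ y := fun hxy => hpq (by rw [hxy])
      have hxy' : x - y ≠ 0 := sub_ne_zero.mpr hxy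
      have h2 := main y hq
      have key1 : c * (x + y) = 2 * g := by
        have hfac : (x - y) * (c * (x + y) - 2 * g) = 0 := by linear_combination h1 - h2
        have := (mul_eq_zero.mp hfac).resolve_left hxy'
        linarith
      have key2 : h = -(c * (x * y)) := by linear_combination -h1 + x * key1
      have hcne : c ≠ 0 := by
        intro hc0
        have hg0 : g = 0 := by rw [hc0] at key1; linarith
        exact hzero hg0 (by rw [key2, hc0]; ring) hc0
      have hdet2 : 4 * N.det = -((c * (x - y)) * (c * (x - y))) := by
        rw [hdet']
        linear_combination (c*(x+y) + 2*g)*key1 + (-(4*c))*key2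
      have hpos : 0 < (c * (x-y)) * (c * (x-y)) := mul_self_pos.mpr (mul_ne_zero hcne hxy')
      linarith

/-! ### matrix algebra for the one-parameter group -/

lemma traceless_sq {H : Mat} (htr : H 1 1 = -H 0 0) (hdet : H.det = -1) : H * H = 1 := by
  have hd := Matrix.det_fin_two H
  rw [hdet, htr] at hd
  ext i j
  fin_cases i <;> fin_cases j <;>
    · simp [Matrix.mul_apply, Fin.sum_univ_two, Matrix.one_apply, htr]
      nlinarith [hd]

lemma det_combo {H : Mat} (htr : H 1 1 = -H 0 0) (hdet : H.det = -1) (a b : ℝ) :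
    (a • (1 : Mat) + b • H).det = a^2 - b^2 := by
  have hd := Matrix.det_fin_two H
  rw [hdet, htr] at hd
  rw [Matrix.det_fin_two]
  simp [Matrix.one_apply, htr]
  nlinarith [hd]

lemma combo_apply (a b : ℝ) (H : Mat) (i j : Fin 2) :
    (a • (1 : Mat) + b • H) i j = a * (1 : Mat) i j + b * H i j := by
  simp

def elG (H : Mat) (htr : H 1 1 = -H 0 0) (hdet : H.det = -1) (s : ℝ) : SL2R :=
  ⟨Real.cosh s • 1 + Real.sinh s • H, by
    rw [det_combo htr hdet, Real.cosh_sq_sub_sinh_sq]⟩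

lemma elG_coe (H : Mat) (htr) (hdet) (s : ℝ) :
    (elG H htr hdet s : Mat) = Real.cosh s • 1 + Real.sinh s • H := rfl

lemma elG_mul (H : Mat) (htr) (hdet) (s t : ℝ) :
    elG H htr hdet s * elG H htr hdet t = elG H htr hdet (s + t) := by
  have hsq := traceless_sq htr hdet
  apply Subtype.ext
  rw [Matrix.SpecialLinearGroup.coe_mul, elG_coe, elG_coe, elG_coe,
    Real.cosh_add, Real.sinh_add]
  simp only [Matrix.add_mul, Matrix.mul_add, Matrix.smul_mul, Matrix.mul_smul, hsq,
    Matrix.one_mul, Matrix.mul_one]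
  module

lemma elG_zero (H : Mat) (htr) (hdet) : elG H htr hdet 0 = 1 := by
  apply Subtype.ext
  rw [elG_coe]
  simp

lemma elG_inv (H : Mat) (htr) (hdet) (s : ℝ) :
    (elG H htr hdet s)⁻¹ = elG H htr hdet (-s) := by
  apply inv_eq_of_mul_eq_one_right
  rw [elG_mul, add_neg_cancel, elG_zero]

lemma elG_npow (H : Mat) (htr) (hdet) (t : ℝ) (n : ℕ) :
    (elG H htr hdet t) ^ n = elG H htr hdet (n * t) := by
  induction n with
  | zero => simp [elG_zero]
  | succ m ih =>
    rw [pow_succ, ih, elG_mul]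
    congr 1
    push_cast
    ring

lemma elG_zpow (H : Mat) (htr) (hdet) (t : ℝ) (k : ℤ) :
    (elG H htr hdet t) ^ k = elG H htr hdet (k * t) := by
  cases k with
  | ofNat n => rw [Int.ofNat_eq_coe, zpow_natCast, elG_npow]; norm_num
  | negSucc m =>
    rw [zpow_negSucc, elG_npow, elG_inv]
    congr 1
    push_cast
    ring

/-! ### topology of `SL2R` and `PSL2R` -/

lemma isEmbedding_coeSL : Topology.IsEmbedding (fun A : SL2R => (A : Mat)) :=
  ⟨⟨rfl⟩, Subtype.coe_injective⟩

instance : T2Space SL2R := isEmbedding_coeSL.t2Space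

instance : FirstCountableTopology Mat :=
  inferInstanceAs (FirstCountableTopology (Fin 2 → Fin 2 → ℝ))

instance : FirstCountableTopology SL2R :=
  ⟨fun X => by
    rw [nhds_induced (fun A : SL2R => (A : Mat)) X]
    exact Filter.comap.isCountablyGenerated _ _⟩

instance : FirstCountableTopology PSL2R :=
  ⟨fun x => by
    obtain ⟨X, rfl⟩ := QuotientGroup.mk_surjective x
    rw [← QuotientGroup.isOpenQuotientMap_mk.map_nhds_eq]
    exact Filter.map.isCountablyGenerated _ _⟩

instance : Fact (Even (Fintype.card (Fin 2))) := ⟨⟨1, rfl⟩⟩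

lemma mk_eq_mk_iff {C D : SL2R} :
    (QuotientGroup.mk C : PSL2R) = QuotientGroup.mk D ↔ C = D ∨ C = -D := by
  rw [QuotientGroup.eq]
  constructor
  · intro hmem
    obtain ⟨r, hr2, hr⟩ := Matrix.SpecialLinearGroup.mem_center_iff.mp hmem
    have hr2' : r = 1 ∨ r = -1 := by
      have : (r - 1) * (r + 1) = 0 := by
        have : r ^ 2 = 1 := by simpa using hr2
        nlinarith [this]
      rcases mul_eq_zero.mp this with h | h
      · left; linarith
      · right; linarith
    have hscal : ∀ u : ℝ, (Matrix.scalar (Fin 2)) u = u • (1 : Mat) := by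
      intro u
      rw [Matrix.scalar_apply, Matrix.smul_one_eq_diagonal]
    rcases hr2' with rfl | rfl
    · left
      have : ((C⁻¹ * D : SL2R) : Mat) = ((1 : SL2R) : Mat) := by
        rw [← hr, hscal]
        simp
      have h1 : C⁻¹ * D = 1 := Subtype.coe_injective this
      have : C * (C⁻¹ * D) = C * 1 := by rw [h1]
      simpa [mul_assoc] using this.symm
    · right
      have : ((C⁻¹ * D : SL2R) : Mat) = ((-1 : SL2R) : Mat) := by
        rw [← hr, hscal, Matrix.SpecialLinearGroup.coe_neg]
        simp
      have h1 : C⁻¹ * D = -1 := Subtype.coe_injective this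
      have : C * (C⁻¹ * D) = C * (-1) := by rw [h1]
      simp only [← mul_assoc, mul_inv_cancel, one_mul, mul_neg_one] at this
      rw [this]
      simp
  · rintro (rfl | h)
    · simp only [inv_mul_cancel]
      exact Subgroup.one_mem _
    · rw [h]
      have hneg : (-D)⁻¹ * D = -1 := by
        rw [← neg_inv, neg_mul, inv_mul_cancel]
      rw [hneg]
      apply Matrix.SpecialLinearGroup.mem_center_iff.mpr
      refine ⟨-1, by norm_num, ?_⟩
      rw [Matrix.scalar_apply, Matrix.SpecialLinearGroup.coe_neg, ← Matrix.smul_one_eq_diagonal]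
      simp

lemma mk_neg (C : SL2R) : (QuotientGroup.mk (-C) : PSL2R) = QuotientGroup.mk C :=
  mk_eq_mk_iff.mpr (Or.inr rfl)


lemma continuous_neg_SL : Continuous (fun Y : SL2R => -Y) :=
  continuous_induced_rng.mpr (by
    simp only [Function.comp_def, Matrix.SpecialLinearGroup.coe_neg]
    exact isEmbedding_coeSL.continuous.neg)

lemma isClosed_fixed (r : OnePoint ℝ) : IsClosed {M : Mat | bFixedM M r} := by
  induction r using OnePoint.rec with
  | infty =>
    exact isClosed_eq (continuous_id.matrix_elem 1 0) continuous_const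
  | coe x =>
    apply isClosed_eq _ continuous_const
    apply Continuous.sub
    apply Continuous.add
    · exact (continuous_id.matrix_elem 1 0).mul continuous_const
    · exact (((continuous_id.matrix_elem 1 1).sub (continuous_id.matrix_elem 0 0)).mul
        continuous_const)
    · exact continuous_id.matrix_elem 0 1

lemma isClosed_stab (p q : OnePoint ℝ) : IsClosed (Stab p q) := by
  have hpre : (QuotientGroup.mk : SL2R → PSL2R) ⁻¹' (Stab p q)
      = {C : SL2R | bFixedM (C : Mat) p ∧ bFixedM (C : Mat) q} := by
    ext C
    constructor
    · rintro ⟨D, hD, h1, h2⟩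
      rcases mk_eq_mk_iff.mp hD with rfl | hEq
      · exact ⟨h1, h2⟩
      · have hDC : (D : Mat) = -(C : Mat) := by
          rw [hEq, Matrix.SpecialLinearGroup.coe_neg]
        rw [bFixed_iff, hDC] at h1 h2
        constructor
        · simpa using bFixedM_neg h1
        · simpa using bFixedM_neg h2
    · intro ⟨h1, h2⟩
      exact ⟨C, rfl, h1, h2⟩
  rw [← QuotientGroup.isOpenQuotientMap_mk.isQuotientMap.isClosed_preimage, hpre]
  have : {C : SL2R | bFixedM (C : Mat) p ∧ bFixedM (C : Mat) q} =
      (fun C : SL2R => (C : Mat)) ⁻¹' ({M : Mat | bFixedM M p} ∩ {M : Mat | bFixedM M q}) := rfl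
  rw [this]
  exact ((isClosed_fixed p).inter (isClosed_fixed q)).preimage isEmbedding_coeSL.continuous

lemma tendsto_abs_trace {As : ℕ → SL2R}
    (hid : Tendsto (fun n => (QuotientGroup.mk (As n) : PSL2R)) atTop (𝓝 1)) :
    Tendsto (fun n => |As n 0 0 + As n 1 1|) atTop (𝓝 2) := by
  rw [Metric.tendsto_atTop]
  intro ε hε
  have e1 : Continuous fun C : SL2R => (C : Mat) 0 0 :=
    isEmbedding_coeSL.continuous.matrix_elem 0 0
  have e2 : Continuous fun C : SL2R => (C : Mat) 1 1 :=
    isEmbedding_coeSL.continuous.matrix_elem 1 1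
  set W : Set SL2R := {C : SL2R | dist |(C : Mat) 0 0 + (C : Mat) 1 1| 2 < ε} with hWdef
  have hWopen : IsOpen W := by
    have : W = (fun C : SL2R => dist |(C : Mat) 0 0 + (C : Mat) 1 1| 2) ⁻¹' (Set.Iio ε) := rfl
    rw [this]
    exact (((e1.add e2).abs.dist continuous_const)).isOpen_preimage _ isOpen_Iio
  have h1W : (1 : SL2R) ∈ W := by
    simp only [hWdef, Set.mem_setOf_eq, Matrix.SpecialLinearGroup.coe_one]
    norm_num [Matrix.one_apply]
    exact hε
  have hopen : IsOpen (QuotientGroup.mk '' W : Set PSL2R) := QuotientGroup.isOpenMap_coe W hWopen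
  have hmem : (QuotientGroup.mk '' W : Set PSL2R) ∈ 𝓝 (1 : PSL2R) :=
    hopen.mem_nhds ⟨1, h1W, rfl⟩
  have hev : ∀ᶠ n in atTop, (QuotientGroup.mk (As n) : PSL2R) ∈ QuotientGroup.mk '' W :=
    hid.eventually (Filter.eventually_of_mem hmem fun y hy => hy)
  obtain ⟨N, hN⟩ := Filter.eventually_atTop.mp hev
  refine ⟨N, fun n hn => ?_⟩
  obtain ⟨C, hCW, hC⟩ := hN n hn
  rcases mk_eq_mk_iff.mp hC with rfl | hEq
  · exact hCW
  · have hDC : (C : Mat) = -((As n : SL2R) : Mat) := by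
      rw [hEq, Matrix.SpecialLinearGroup.coe_neg]
    rw [hWdef, Set.mem_setOf_eq, hDC] at hCW
    simp only [Matrix.neg_apply] at hCW
    rw [show -(As n : Mat) 0 0 + -(As n : Mat) 1 1 = -((As n : Mat) 0 0 + (As n : Mat) 1 1) by
      ring, abs_neg] at hCW
    exact hCW

lemma lift_lemma {C : ℕ → SL2R} {x : PSL2R}
    (h : Tendsto (fun j => (QuotientGroup.mk (C j) : PSL2R)) atTop (𝓝 x)) :
    ∃ X : SL2R, (QuotientGroup.mk X : PSL2R) = x ∧ ∃ ε : ℕ → ℝ,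
      (∀ j, ε j = 1 ∨ ε j = -1) ∧
      Tendsto (fun j => ε j • ((C j : SL2R) : Mat)) atTop (𝓝 (X : Mat)) := by
  classical
  obtain ⟨X, rfl⟩ := QuotientGroup.mk_surjective x
  have hXne : X ≠ -X := by
    intro hX
    have h2 : (X : Mat) = -(X : Mat) := by
      conv_lhs => rw [hX]
      rw [Matrix.SpecialLinearGroup.coe_neg]
    have h0 : (X : Mat) = 0 := by
      ext i j
      have := congrFun (congrFun h2 i) j
      simp only [Matrix.neg_apply] at this
      simp only [Matrix.zero_apply]
      linarith
    have := X.property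
    rw [h0] at this
    simp at this
  obtain ⟨W₁, W₂, hW₁, hW₂, hXW₁, hXW₂, hdisj⟩ := t2_separation hXne
  set W := W₁ ∩ (fun Y : SL2R => -Y) ⁻¹' W₂ with hWdef
  have hWopen : IsOpen W := hW₁.inter (hW₂.preimage continuous_neg_SL)
  have hXW : X ∈ W := ⟨hXW₁, hXW₂⟩
  have hkey : ∀ Y ∈ W, -Y ∉ W := by
    rintro Y ⟨hY1, hY2⟩ ⟨hnY1, _⟩
    exact Set.disjoint_left.mp hdisj hnY1 hY2
  set D : ℕ → SL2R := fun j => if C j ∈ W then C j else -(C j) with hDdef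
  have hDW : Tendsto D atTop (𝓝 X) := by
    rw [tendsto_nhds]
    intro V hVopen hXV
    have hWV : IsOpen (W ∩ V) := hWopen.inter hVopen
    have hmem : QuotientGroup.mk '' (W ∩ V) ∈ 𝓝 (QuotientGroup.mk X : PSL2R) :=
      (QuotientGroup.isOpenMap_coe _ hWV).mem_nhds ⟨X, ⟨hXW, hXV⟩, rfl⟩
    have hev := h.eventually (Filter.eventually_of_mem hmem fun y hy => hy)
    filter_upwards [hev] with j hj
    obtain ⟨Y, ⟨hYW, hYV⟩, hYeq⟩ := hj
    rcases mk_eq_mk_iff.mp hYeq with hEq | hEq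
    · have hCW : C j ∈ W := hEq ▸ hYW
      show (if C j ∈ W then C j else -(C j)) ∈ V
      rw [if_pos hCW, ← hEq]; exact hYV
    · by_cases hCW : C j ∈ W
      · exact absurd (hEq ▸ hYW) (hkey (C j) hCW)
      · show (if C j ∈ W then C j else -(C j)) ∈ V
        rw [if_neg hCW, ← hEq]; exact hYV
  refine ⟨X, rfl, fun j => if C j ∈ W then 1 else -1, fun j => by by_cases hj : C j ∈ W <;> simp [hj], ?_⟩
  have hDcoe : Tendsto (fun j => ((D j : SL2R) : Mat)) atTop (𝓝 (X : Mat)) :=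
    (isEmbedding_coeSL.continuous.tendsto X).comp hDW
  refine hDcoe.congr ?_
  intro j
  by_cases hj : C j ∈ W <;> simp [hDdef, hj, Matrix.SpecialLinearGroup.coe_neg]

/-! ### convergence of the normalized traceless matrices -/

def toR : OnePoint ℝ → ℝ := fun y => OnePoint.rec 0 id y
def invR : OnePoint ℝ → ℝ := fun y => OnePoint.rec 0 (fun t => t⁻¹) y

@[simp] lemma toR_coe (x : ℝ) : toR (x : OnePoint ℝ) = x := rfl
@[simp] lemma invR_coe (x : ℝ) : invR (x : OnePoint ℝ) = x⁻¹ := rfl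
@[simp] lemma invR_infty : invR (OnePoint.infty) = 0 := rfl

lemma eventually_coe {p_ : ℕ → OnePoint ℝ} {x : ℝ}
    (hp : Tendsto p_ atTop (𝓝 (x : OnePoint ℝ))) :
    ∀ᶠ n in atTop, p_ n = ((toR (p_ n) : ℝ) : OnePoint ℝ) := by
  have hr : Set.range ((↑) : ℝ → OnePoint ℝ) ∈ 𝓝 ((x : ℝ) : OnePoint ℝ) :=
    OnePoint.isOpenEmbedding_coe.isOpen_range.mem_nhds ⟨x, rfl⟩
  filter_upwards [hp.eventually (Filter.eventually_of_mem hr fun y hy => hy)] with n hn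
  obtain ⟨t, ht⟩ := hn
  rw [← ht]
  rfl

lemma tendsto_toR {p_ : ℕ → OnePoint ℝ} {x : ℝ}
    (hp : Tendsto p_ atTop (𝓝 (x : OnePoint ℝ))) :
    Tendsto (fun n => toR (p_ n)) atTop (𝓝 x) := by
  rw [tendsto_nhds]
  intro s hs hxs
  have hmem : (↑) '' s ∈ 𝓝 ((x : ℝ) : OnePoint ℝ) := by
    rw [← OnePoint.isOpenEmbedding_coe.map_nhds_eq]
    exact Filter.image_mem_map (hs.mem_nhds hxs)
  filter_upwards [hp.eventually (Filter.eventually_of_mem hmem fun y hy => hy)] with n hn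
  obtain ⟨t, hts, ht⟩ := hn
  show toR (p_ n) ∈ s
  rw [← ht]
  simpa using hts

lemma eventually_large {p_ : ℕ → OnePoint ℝ}
    (hp : Tendsto p_ atTop (𝓝 (OnePoint.infty : OnePoint ℝ))) (M : ℝ) :
    ∀ᶠ n in atTop, p_ n = OnePoint.infty ∨ ∃ t : ℝ, p_ n = (t : OnePoint ℝ) ∧ M < |t| := by
  have hS : ({OnePoint.infty} ∪ (↑) '' {t : ℝ | M < |t|}) ∈ 𝓝 (OnePoint.infty : OnePoint ℝ) := by
    rw [OnePoint.nhds_infty_eq, Filter.mem_sup]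
    constructor
    · rw [Filter.mem_map, Filter.coclosedCompact_eq_cocompact, Filter.mem_cocompact]
      refine ⟨Set.Icc (-(|M|+1)) (|M|+1), isCompact_Icc, ?_⟩
      intro t ht
      rw [Set.mem_compl_iff, Set.mem_Icc, ← abs_le] at ht
      push_neg at ht
      have hMt : M < |t| := lt_of_le_of_lt (le_abs_self M) (by linarith)
      exact Set.mem_preimage.mpr (Or.inr ⟨t, hMt, rfl⟩)
    · rw [Filter.mem_pure]
      exact Or.inl rfl
  filter_upwards [hp.eventually (Filter.eventually_of_mem hS fun y hy => hy)] with n hn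
  rcases hn with hn | ⟨t, hts, ht⟩
  · left; simpa using hn
  · right; exact ⟨t, ht.symm, hts⟩

lemma tendsto_invR {p_ : ℕ → OnePoint ℝ}
    (hp : Tendsto p_ atTop (𝓝 (OnePoint.infty : OnePoint ℝ))) :
    Tendsto (fun n => invR (p_ n)) atTop (𝓝 0) := by
  rw [Metric.tendsto_atTop]
  intro ε hε
  obtain ⟨N, hN⟩ := Filter.eventually_atTop.mp (eventually_large hp ε⁻¹)
  refine ⟨N, fun n hn => ?_⟩
  rcases hN n hn with h | ⟨t, ht, htl⟩
  · rw [h]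
    simpa using hε
  · rw [ht]
    simp only [invR_coe, Real.dist_eq, sub_zero, abs_inv]
    calc |t|⁻¹ < (ε⁻¹)⁻¹ := inv_strictAnti₀ (by positivity) htl
      _ = ε := inv_inv ε

lemma tendsto_vp {p_ : ℕ → OnePoint ℝ} {p : OnePoint ℝ} (hp : Tendsto p_ atTop (𝓝 p)) :
    ∃ v : ℕ → Fin 2 → ℝ, Tendsto v atTop (𝓝 (vp p)) ∧
      ∀ᶠ n in atTop, ∃ c : ℝ, c ≠ 0 ∧ vp (p_ n) = c • v n := by
  induction p using OnePoint.rec with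
  | infty =>
    refine ⟨fun n => ![1, invR (p_ n)], ?_, ?_⟩
    · rw [vp_infty, tendsto_pi_nhds]
      intro i
      fin_cases i
      · simpa using tendsto_const_nhds
      · simpa using tendsto_invR hp
    · filter_upwards [eventually_large hp 1] with n hn
      rcases hn with hn | ⟨t, ht, htl⟩
      · refine ⟨1, one_ne_zero, ?_⟩
        rw [hn, vp_infty]
        funext i
        fin_cases i <;> simp
      · have htne : t ≠ 0 := by
          intro h0
          rw [h0] at htl
          simp at htl
          linarith
        refine ⟨t, htne, ?_⟩
        rw [ht, vp_coe]
        funext i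
        fin_cases i <;> simp [mul_inv_cancel₀ htne]
  | coe x =>
    refine ⟨fun n => ![toR (p_ n), 1], ?_, ?_⟩
    · rw [vp_coe, tendsto_pi_nhds]
      intro i
      fin_cases i
      · simpa using tendsto_toR hp
      · simpa using tendsto_const_nhds
    · filter_upwards [eventually_coe hp] with n hn
      refine ⟨1, one_ne_zero, ?_⟩
      conv_lhs => rw [hn, vp_coe]
      funext i
      fin_cases i <;> simp

lemma tendsto_MatG {v w : ℕ → Fin 2 → ℝ} {v₀ w₀ : Fin 2 → ℝ}
    (hv : Tendsto v atTop (𝓝 v₀)) (hw : Tendsto w atTop (𝓝 w₀)) (hwed : wedge v₀ w₀ ≠ 0) :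
    Tendsto (fun n => MatG (v n) (w n)) atTop (𝓝 (MatG v₀ w₀)) := by
  have hv0 : Tendsto (fun n => v n 0) atTop (𝓝 (v₀ 0)) := tendsto_pi_nhds.mp hv 0
  have hv1 : Tendsto (fun n => v n 1) atTop (𝓝 (v₀ 1)) := tendsto_pi_nhds.mp hv 1
  have hw0 : Tendsto (fun n => w n 0) atTop (𝓝 (w₀ 0)) := tendsto_pi_nhds.mp hw 0
  have hw1 : Tendsto (fun n => w n 1) atTop (𝓝 (w₀ 1)) := tendsto_pi_nhds.mp hw 1
  have hwedt : Tendsto (fun n => wedge (v n) (w n)) atTop (𝓝 (wedge v₀ w₀)) :=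
    (hv0.mul hw1).sub (hv1.mul hw0)
  have hinv := hwedt.inv₀ hwed
  apply tendsto_pi_nhds.mpr
  intro i
  apply tendsto_pi_nhds.mpr
  intro j
  fin_cases i <;> fin_cases j
  · simpa only [Fin.zero_eta, Fin.mk_one, MatG_apply_00] using hinv.mul ((hv0.mul hw1).add (hv1.mul hw0))
  · simpa only [Fin.zero_eta, Fin.mk_one, MatG_apply_01] using hinv.mul (((hv0.mul hw0).const_mul 2).neg)
  · simpa only [Fin.zero_eta, Fin.mk_one, MatG_apply_10] using hinv.mul ((hv1.mul hw1).const_mul 2)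
  · simpa only [Fin.zero_eta, Fin.mk_one, MatG_apply_11] using hinv.mul (((hv0.mul hw1).add (hv1.mul hw0)).neg)

lemma tendsto_Gm {p_ q_ : ℕ → OnePoint ℝ} {p q : OnePoint ℝ}
    (hp : Tendsto p_ atTop (𝓝 p)) (hq : Tendsto q_ atTop (𝓝 q)) (hpq : p ≠ q) :
    Tendsto (fun n => Gm (p_ n) (q_ n)) atTop (𝓝 (Gm p q)) := by
  obtain ⟨v, hv, hvc⟩ := tendsto_vp hp
  obtain ⟨w, hw, hwc⟩ := tendsto_vp hq
  have hmain := tendsto_MatG hv hw (wedge_vp_ne hpq)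
  apply hmain.congr'
  filter_upwards [hvc, hwc] with n hcv hdv
  obtain ⟨c, hc, hcv⟩ := hcv
  obtain ⟨d, hd, hdv⟩ := hdv
  rw [Gm, hcv, hdv, MatG_smul_left _ _ hc, MatG_smul_right _ _ hd]


lemma tendsto_mk_SL {f : ℕ → SL2R} {X : SL2R}
    (h : Tendsto (fun n => ((f n : SL2R) : Mat)) atTop (𝓝 (X : Mat))) :
    Tendsto (fun n => (QuotientGroup.mk (f n) : PSL2R)) atTop (𝓝 (QuotientGroup.mk X)) := by
  have h1 : Tendsto f atTop (𝓝 X) := isEmbedding_coeSL.toIsInducing.tendsto_nhds_iff.mpr h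
  exact (QuotientGroup.isOpenQuotientMap_mk.continuous.tendsto X).comp h1

end Stmt9Aux

set_option maxHeartbeats 2000000 in
open Stmt9Aux in
/-- hyperbolic elements with translation lengths tending to `0`, axes
converging to the geodesic `γ` with endpoints `p ≠ q`, and converging to the identity:
after passing to a subsequence, the geometric limit of `⟨gₙ⟩` is either the full
one-parameter hyperbolic group with axis `γ`, or a discrete infinite cyclic group of
hyperbolic elements with axis `γ`. -/
theorem stmt9 (A : ℕ → SL2R) (hhyp : ∀ n, 2 < |A n 0 0 + A n 1 1|)
    (hlen : Tendsto (fun n => ⨅ z : UpperHalfPlane, dist z ((A n) • z)) atTop (nhds 0))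
    (p_ q_ : ℕ → OnePoint ℝ) (p q : OnePoint ℝ) (hpq : p ≠ q)
    (hfix : ∀ n, bFixed (A n) (p_ n) ∧ bFixed (A n) (q_ n) ∧ p_ n ≠ q_ n)
    (hp : Tendsto p_ atTop (nhds p)) (hq : Tendsto q_ atTop (nhds q))
    (hid : Tendsto (fun n => (QuotientGroup.mk (A n) : PSL2R)) atTop (nhds 1)) :
    ∃ φ : ℕ → ℕ, StrictMono φ ∧ ∃ L : Set PSL2R, IsClosed L ∧
      Tendsto (fun k => closure ((Subgroup.zpowers (QuotientGroup.mk (A (φ k)) : PSL2R)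
          : Subgroup PSL2R) : Set PSL2R)) atTop (@nhds _ (ChabautyFell PSL2R) L) ∧
      (L = Stab p q ∨
        ∃ B : SL2R, 2 < |B 0 0 + B 1 1| ∧ bFixed B p ∧ bFixed B q ∧
          L = ((Subgroup.zpowers (QuotientGroup.mk B : PSL2R) : Subgroup PSL2R) : Set PSL2R) ∧
          DiscreteTopology L ∧ L.Infinite) := by
  classical
  refine ⟨id, strictMono_id, Stab p q, isClosed_stab p q, ?_, Or.inl rfl⟩
  -- ### setup of the normalized data
  set τ : ℕ → ℝ := fun n => |A n 0 0 + A n 1 1| with hτdef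
  have hτ2 : ∀ n, 2 < τ n := hhyp
  have hτlim : Tendsto τ atTop (𝓝 2) := tendsto_abs_trace hid
  set B : ℕ → SL2R := fun n => if 0 ≤ A n 0 0 + A n 1 1 then A n else -(A n) with hBdef
  have hBmk : ∀ n, (QuotientGroup.mk (B n) : PSL2R) = QuotientGroup.mk (A n) := by
    intro n
    by_cases h : 0 ≤ A n 0 0 + A n 1 1
    · simp only [hBdef, if_pos h]
    · simp only [hBdef, if_neg h, mk_neg]
  have hBtr : ∀ n, (B n : Mat) 0 0 + (B n : Mat) 1 1 = τ n := by
    intro n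
    by_cases h : 0 ≤ A n 0 0 + A n 1 1
    · simp only [hBdef, if_pos h, hτdef]
      rw [abs_of_nonneg h]
    · simp only [hBdef, if_neg h, hτdef, Matrix.SpecialLinearGroup.coe_neg, Matrix.neg_apply]
      push_neg at h
      rw [abs_of_neg h]
      ring
  have hBfix : ∀ n, bFixedM ((B n : SL2R) : Mat) (p_ n) ∧ bFixedM ((B n : SL2R) : Mat) (q_ n) := by
    intro n
    have h1 := (hfix n).1
    have h2 := (hfix n).2.1
    rw [bFixed_iff] at h1 h2
    by_cases h : 0 ≤ A n 0 0 + A n 1 1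
    · simp only [hBdef, if_pos h]
      exact ⟨h1, h2⟩
    · simp only [hBdef, if_neg h, Matrix.SpecialLinearGroup.coe_neg]
      exact ⟨bFixedM_neg h1, bFixedM_neg h2⟩
  set G : Mat := Gm p q with hGdef
  have htrG : G 1 1 = -(G 0 0) := Gm_trace p q
  have hdetG : G.det = -1 := Gm_det hpq
  set H : ℕ → Mat := fun n => Gm (p_ n) (q_ n) with hHdef
  have htrH : ∀ n, H n 1 1 = -(H n 0 0) := fun n => Gm_trace _ _
  have hdetH : ∀ n, (H n).det = -1 := fun n => Gm_det (hfix n).2.2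
  have hHG : Tendsto H atTop (𝓝 G) := tendsto_Gm hp hq hpq
  -- ### decomposition of B n as a hyperbolic element of the one-parameter group of H n
  have hdec : ∀ n, ∃ t : ℝ, t ≠ 0 ∧ |t| ≤ Real.arsinh (Real.sqrt ((τ n / 2)^2 - 1)) ∧
      B n = elG (H n) (htrH n) (hdetH n) t := by
    intro n
    have hτn := hτ2 n
    set δ := Real.sqrt ((τ n / 2)^2 - 1) with hδdef
    have hδpos : 0 < δ := Real.sqrt_pos.mpr (by nlinarith)
    have hδsq : δ^2 = (τ n / 2)^2 - 1 := Real.sq_sqrt (by nlinarith)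
    set N : Mat := (B n : Mat) - (τ n / 2) • 1 with hNdef
    have hN10 : N 1 0 = (B n : Mat) 1 0 := by
      simp [hNdef, Matrix.sub_apply, Matrix.smul_apply, Matrix.one_apply]
    have hN01 : N 0 1 = (B n : Mat) 0 1 := by
      simp [hNdef, Matrix.sub_apply, Matrix.smul_apply, Matrix.one_apply]
    have hN00 : N 0 0 = (B n : Mat) 0 0 - τ n / 2 := by
      simp [hNdef, Matrix.sub_apply, Matrix.smul_apply, Matrix.one_apply]
    have hN11 : N 1 1 = (B n : Mat) 1 1 - τ n / 2 := by
      simp [hNdef, Matrix.sub_apply, Matrix.smul_apply, Matrix.one_apply]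
    have htrN : N 1 1 = -(N 0 0) := by
      rw [hN11, hN00]
      linarith [hBtr n]
    have hdetB : (B n : Mat).det = 1 := (B n).property
    have hdetN : N.det = -(δ^2) := by
      rw [Matrix.det_fin_two, hN00, hN01, hN10, hN11, hδsq]
      have hdf := Matrix.det_fin_two ((B n : SL2R) : Mat)
      rw [hdetB] at hdf
      have htr := hBtr n
      nlinarith [hdf]
    have hNfixp : bFixedM N (p_ n) :=
      bFixedM_of_proportional 1 (by rw [hN10]; ring)
        (by rw [hN11, hN00]; ring) (by rw [hN01]; ring) (hBfix n).1
    have hNfixq : bFixedM N (q_ n) :=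
      bFixedM_of_proportional 1 (by rw [hN10]; ring)
        (by rw [hN11, hN00]; ring) (by rw [hN01]; ring) (hBfix n).2
    set G0 : Mat := δ⁻¹ • N with hG0def
    have hG0e : ∀ i j, G0 i j = δ⁻¹ * N i j := by
      intro i j; simp [hG0def, Matrix.smul_apply]
    have htrG0 : G0 1 1 = -(G0 0 0) := by rw [hG0e, hG0e, htrN]; ring
    have hdetG0 : G0.det = -1 := by
      rw [hG0def, Matrix.det_smul, hdetN]
      simp only [Fintype.card_fin]
      field_simp
      try rw [hδsq]
      try ring
    have hfixG0p : bFixedM G0 (p_ n) :=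
      bFixedM_of_proportional δ⁻¹ (hG0e 1 0) (by rw [hG0e, hG0e]; ring) (hG0e 0 1) hNfixp
    have hfixG0q : bFixedM G0 (q_ n) :=
      bFixedM_of_proportional δ⁻¹ (hG0e 1 0) (by rw [hG0e, hG0e]; ring) (hG0e 0 1) hNfixq
    have huniq := traceless_unique (hfix n).2.2 htrG0 hdetG0 hfixG0p hfixG0q
    have hNG : N = δ • G0 := by
      rw [hG0def, smul_smul, mul_inv_cancel₀ (ne_of_gt hδpos), one_smul]
    have hBN : ((B n : SL2R) : Mat) = (τ n / 2) • 1 + N := by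
      rw [hNdef, add_sub_cancel]
    have hcosh : Real.cosh (Real.arsinh δ) = τ n / 2 := by
      rw [Real.cosh_arsinh, show (1 : ℝ) + δ^2 = (τ n / 2)^2 by rw [hδsq]; ring]
      exact Real.sqrt_sq (by linarith)
    have harsinh_pos : 0 < Real.arsinh δ := Real.arsinh_pos_iff.mpr hδpos
    rcases huniq with hG0H | hG0H
    · refine ⟨Real.arsinh δ, ne_of_gt harsinh_pos, le_of_eq (abs_of_pos harsinh_pos), ?_⟩
      apply Subtype.ext
      rw [elG_coe, Real.sinh_arsinh, hcosh, hBN, hNG, hG0H]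
    · refine ⟨-(Real.arsinh δ), ne_of_lt (by linarith), le_of_eq (by rw [abs_neg, abs_of_pos harsinh_pos]), ?_⟩
      apply Subtype.ext
      rw [elG_coe, Real.sinh_neg, Real.cosh_neg, Real.sinh_arsinh, hcosh, hBN, hNG, hG0H,
        smul_neg, neg_smul]
  choose t htne htbd hBel using hdec
  have hδlim : Tendsto (fun n => Real.arsinh (Real.sqrt ((τ n / 2)^2 - 1))) atTop (𝓝 0) := by
    have h1 : Tendsto (fun n => (τ n / 2)^2 - 1) atTop (𝓝 0) := by
      have := ((hτlim.div_const 2).pow 2).sub_const 1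
      norm_num at this
      exact this
    have h2 : Tendsto (fun n => Real.sqrt ((τ n / 2)^2 - 1)) atTop (𝓝 0) := by
      have := (Real.continuous_sqrt.tendsto 0).comp h1
      simpa [Function.comp_def] using this
    have := (Real.continuous_arsinh.tendsto 0).comp h2
    simpa [Real.arsinh_zero, Function.comp_def] using this
  have ht0 : Tendsto t atTop (𝓝 0) := squeeze_zero_norm htbd hδlim
  -- ### the Chabauty–Fell convergence
  have hnh : @nhds _ (ChabautyFell PSL2R) (Stab p q) =
      ⨅ S ∈ {S | Stab p q ∈ S ∧ S ∈
        ({S | ∃ K : Set PSL2R, IsCompact K ∧ S = {A : Set PSL2R | A ∩ K = ∅}} ∪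
         {S | ∃ U : Set PSL2R, IsOpen U ∧ S = {A : Set PSL2R | (A ∩ U).Nonempty}})}, 𝓟 S :=
    TopologicalSpace.nhds_generateFrom
  rw [hnh, tendsto_iInf]
  intro S
  rw [tendsto_iInf]
  rintro ⟨hLS, hSgen⟩
  rw [tendsto_principal]
  simp only [id_eq]
  rcases hSgen with ⟨K, hK, rfl⟩ | ⟨U, hU, rfl⟩
  · -- ### compact avoidance
    have hKdis : Stab p q ∩ K = ∅ := hLS
    have havoid : ∀ x ∈ K, ∃ V : Set PSL2R, IsOpen V ∧ x ∈ V ∧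
        ∀ᶠ n in atTop, closure ((Subgroup.zpowers (QuotientGroup.mk (A n) : PSL2R)
          : Subgroup PSL2R) : Set PSL2R) ∩ V = ∅ := by
      intro x hxK
      by_contra hcon
      push_neg at hcon
      have hxnot : x ∉ Stab p q := by
        intro hx
        have : x ∈ Stab p q ∩ K := ⟨hx, hxK⟩
        rw [hKdis] at this
        exact this
      obtain ⟨ts, hts⟩ := Filter.exists_antitone_basis (𝓝 x)
      have hfreq : ∀ j : ℕ, ∃ᶠ n in atTop,
          ∃ kk : ℤ, (QuotientGroup.mk (A n) : PSL2R) ^ kk ∈ ts j := by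
        intro j
        have htsj : ts j ∈ 𝓝 x := hts.1.mem_of_mem trivial
        obtain ⟨V, hVsub, hVopen, hxV⟩ := mem_nhds_iff.mp htsj
        have hfr := hcon V hVopen hxV
        apply hfr.mono
        intro n hn
        have hne : (closure ((Subgroup.zpowers (QuotientGroup.mk (A n) : PSL2R)
            : Subgroup PSL2R) : Set PSL2R) ∩ V).Nonempty := hn
        obtain ⟨y, hy1, hy2⟩ := (closure_inter_open_nonempty_iff hVopen).mp hne
        obtain ⟨kk, hkk⟩ := Subgroup.mem_zpowers_iff.mp hy1
        exact ⟨kk, by rw [hkk]; exact hVsub hy2⟩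
      obtain ⟨φ, hφ, hφk⟩ := Filter.extraction_forall_of_frequently hfreq
      choose kk hkk using hφk
      have hylim : Tendsto (fun j => (QuotientGroup.mk (A (φ j)) : PSL2R) ^ kk j) atTop (𝓝 x) :=
        hts.tendsto hkk
      have hylim' : Tendsto (fun j => (QuotientGroup.mk ((B (φ j)) ^ kk j) : PSL2R)) atTop (𝓝 x) := by
        apply hylim.congr
        intro j
        rw [QuotientGroup.mk_zpow, hBmk]
      obtain ⟨X, hXx, ε, hεpm, hconv⟩ := lift_lemma hylim'
      have hcoe : ∀ j, (((B (φ j)) ^ kk j : SL2R) : Mat) =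
          Real.cosh ((kk j : ℝ) * t (φ j)) • 1 + Real.sinh ((kk j : ℝ) * t (φ j)) • H (φ j) := by
        intro j
        rw [hBel (φ j), elG_zpow, elG_coe]
      set cj : ℕ → ℝ := fun j => ε j * Real.cosh ((kk j : ℝ) * t (φ j)) with hcjdef
      set sj : ℕ → ℝ := fun j => ε j * Real.sinh ((kk j : ℝ) * t (φ j)) with hsjdef
      have hconv' : Tendsto (fun j => cj j • (1 : Mat) + sj j • H (φ j)) atTop (𝓝 (X : Mat)) := by
        apply hconv.congr
        intro j
        rw [hcoe j, smul_add, smul_smul, smul_smul]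
      have hHφ : Tendsto (fun j => H (φ j)) atTop (𝓝 G) := hHG.comp hφ.tendsto_atTop
      have hent : ∀ (i j' : Fin 2), Tendsto (fun j => (cj j • (1 : Mat) + sj j • H (φ j)) i j')
          atTop (𝓝 ((X : Mat) i j')) := fun i j' =>
        ((continuous_id.matrix_elem i j').tendsto _).comp hconv'
      set a : ℝ := ((X : Mat) 0 0 + (X : Mat) 1 1) / 2 with hadef
      have hc : Tendsto cj atTop (𝓝 a) := by
        have h2 : Tendsto (fun j => ((cj j • (1 : Mat) + sj j • H (φ j)) 0 0 +
            (cj j • (1 : Mat) + sj j • H (φ j)) 1 1) / 2) atTop (𝓝 a) :=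
          ((hent 0 0).add (hent 1 1)).div_const 2
        apply h2.congr
        intro j
        simp only [Matrix.add_apply, Matrix.smul_apply, Matrix.one_apply_eq, smul_eq_mul]
        rw [htrH (φ j)]
        ring
      obtain ⟨i0, j0, hG0⟩ : ∃ i0 j0 : Fin 2, G i0 j0 ≠ 0 := by
        by_contra hall
        push_neg at hall
        have : G = 0 := by ext i j; simpa using hall i j
        rw [this] at hdetG
        simp at hdetG
      have hHent : Tendsto (fun j => H (φ j) i0 j0) atTop (𝓝 (G i0 j0)) :=
        ((continuous_id.matrix_elem i0 j0).tendsto _).comp hHφ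
      set b : ℝ := ((X : Mat) i0 j0 - a * (1 : Mat) i0 j0) / G i0 j0 with hbdef
      have hsj : Tendsto sj atTop (𝓝 b) := by
        have hnum : Tendsto (fun j => (cj j • (1 : Mat) + sj j • H (φ j)) i0 j0 -
            cj j * (1 : Mat) i0 j0) atTop (𝓝 ((X : Mat) i0 j0 - a * (1 : Mat) i0 j0)) :=
          (hent i0 j0).sub (hc.mul_const _)
        have hnum' : Tendsto (fun j => sj j * H (φ j) i0 j0) atTop
            (𝓝 ((X : Mat) i0 j0 - a * (1 : Mat) i0 j0)) := by
          apply hnum.congr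
          intro j
          simp only [Matrix.add_apply, Matrix.smul_apply, smul_eq_mul]
          ring
        have hdiv := hnum'.div hHent hG0
        apply hdiv.congr'
        filter_upwards [hHent.eventually_ne hG0] with j hj
        rw [Pi.div_apply]
        field_simp
      have hlim2 : Tendsto (fun j => cj j • (1 : Mat) + sj j • H (φ j)) atTop
          (𝓝 (a • (1 : Mat) + b • G)) := (hc.smul tendsto_const_nhds).add (hsj.smul hHφ)
      have hXeq : (X : Mat) = a • (1 : Mat) + b • G := tendsto_nhds_unique hconv' hlim2
      have hXent : ∀ i j', (X : Mat) i j' = a * (1 : Mat) i j' + b * G i j' := by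
        intro i j'
        rw [hXeq]
        simp [Matrix.add_apply, Matrix.smul_apply]
      have hfixXp : bFixedM (X : Mat) p := by
        refine bFixedM_of_proportional b ?_ ?_ ?_ (Gm_fixed_fst hpq)
        · rw [hXent]; simp [Matrix.one_apply, hGdef]
        · rw [hXent, hXent]; simp [Matrix.one_apply]; ring
        · rw [hXent]; simp [Matrix.one_apply, hGdef]
      have hfixXq : bFixedM (X : Mat) q := by
        refine bFixedM_of_proportional b ?_ ?_ ?_ (Gm_fixed_snd hpq)
        · rw [hXent]; simp [Matrix.one_apply, hGdef]
        · rw [hXent, hXent]; simp [Matrix.one_apply]; ring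
        · rw [hXent]; simp [Matrix.one_apply, hGdef]
      exact hxnot ⟨X, hXx, hfixXp, hfixXq⟩
    choose! V hVopen hVmem hVev using havoid
    obtain ⟨fins, hfinsK, hcover⟩ :=
      hK.elim_nhds_subcover V (fun x hx => (hVopen x hx).mem_nhds (hVmem x hx))
    have hall : ∀ᶠ n in atTop, ∀ x ∈ fins,
        closure ((Subgroup.zpowers (QuotientGroup.mk (A n) : PSL2R)
          : Subgroup PSL2R) : Set PSL2R) ∩ V x = ∅ :=
      (Filter.eventually_all_finset fins).mpr (fun x hx => hVev x (hfinsK x hx))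
    filter_upwards [hall] with n hn
    show closure ((Subgroup.zpowers (QuotientGroup.mk (A n) : PSL2R)
      : Subgroup PSL2R) : Set PSL2R) ∩ K = ∅
    rw [Set.eq_empty_iff_forall_notMem]
    rintro y ⟨hy1, hy2⟩
    obtain ⟨xc, hxc, hyV⟩ := Set.mem_iUnion₂.mp (hcover hy2)
    have hem := hn xc hxc
    rw [Set.eq_empty_iff_forall_notMem] at hem
    exact hem y ⟨hy1, hyV⟩
  · -- ### open sets are eventually hit
    obtain ⟨x, hxStab, hxU⟩ := hLS
    obtain ⟨s, hs⟩ : ∃ s : ℝ, (QuotientGroup.mk (elG G htrG hdetG s) : PSL2R) = x := by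
      obtain ⟨C, hCx, hfp, hfq⟩ := hxStab
      rw [bFixed_iff] at hfp hfq
      obtain ⟨a, b, hCdec⟩ : ∃ a b : ℝ, (C : Mat) = a • (1 : Mat) + b • G := by
        set τC := (C : Mat) 0 0 + (C : Mat) 1 1 with hτC
        set NC : Mat := (C : Mat) - (τC / 2) • 1 with hNC
        have hN10 : NC 1 0 = (C : Mat) 1 0 := by
          simp [hNC, Matrix.sub_apply, Matrix.smul_apply, Matrix.one_apply]
        have hN01 : NC 0 1 = (C : Mat) 0 1 := by
          simp [hNC, Matrix.sub_apply, Matrix.smul_apply, Matrix.one_apply]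
        have hN00 : NC 0 0 = (C : Mat) 0 0 - τC / 2 := by
          simp [hNC, Matrix.sub_apply, Matrix.smul_apply, Matrix.one_apply]
        have hN11 : NC 1 1 = (C : Mat) 1 1 - τC / 2 := by
          simp [hNC, Matrix.sub_apply, Matrix.smul_apply, Matrix.one_apply]
        have htrNC : NC 1 1 = -(NC 0 0) := by
          rw [hN11, hN00, hτC]; ring
        have hfpN : bFixedM NC p :=
          bFixedM_of_proportional 1 (by rw [hN10]; ring)
            (by rw [hN11, hN00]; ring) (by rw [hN01]; ring) hfp
        have hfqN : bFixedM NC q :=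
          bFixedM_of_proportional 1 (by rw [hN10]; ring)
            (by rw [hN11, hN00]; ring) (by rw [hN01]; ring) hfq
        have hCN : (C : Mat) = (τC / 2) • 1 + NC := by rw [hNC, add_sub_cancel]
        by_cases hNC0 : NC = 0
        · exact ⟨τC / 2, 0, by rw [hCN, hNC0]; simp⟩
        · have hdetNC : NC.det < 0 := traceless_detneg hpq htrNC hNC0 hfpN hfqN
          set δC := Real.sqrt (-NC.det) with hδC
          have hδCpos : 0 < δC := Real.sqrt_pos.mpr (by linarith)
          have hδCsq : δC^2 = -NC.det := Real.sq_sqrt (by linarith)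
          set G0 : Mat := δC⁻¹ • NC with hG0def
          have hG0e : ∀ i j, G0 i j = δC⁻¹ * NC i j := by
            intro i j; simp [hG0def, Matrix.smul_apply]
          have htrG0 : G0 1 1 = -(G0 0 0) := by rw [hG0e, hG0e, htrNC]; ring
          have hdetG0 : G0.det = -1 := by
            rw [hG0def, Matrix.det_smul]
            simp only [Fintype.card_fin]
            field_simp
            rw [hδCsq]; ring
          have hfixG0p : bFixedM G0 p :=
            bFixedM_of_proportional δC⁻¹ (hG0e 1 0) (by rw [hG0e, hG0e]; ring) (hG0e 0 1) hfpN
          have hfixG0q : bFixedM G0 q :=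
            bFixedM_of_proportional δC⁻¹ (hG0e 1 0) (by rw [hG0e, hG0e]; ring) (hG0e 0 1) hfqN
          have hNG : NC = δC • G0 := by
            rw [hG0def, smul_smul, mul_inv_cancel₀ (ne_of_gt hδCpos), one_smul]
          rcases traceless_unique hpq htrG0 hdetG0 hfixG0p hfixG0q with hG0H | hG0H
          · exact ⟨τC / 2, δC, by rw [hCN, hNG, hG0H]⟩
          · exact ⟨τC / 2, -δC, by rw [hCN, hNG, hG0H, smul_neg, neg_smul]⟩
      have hdetab : a^2 - b^2 = 1 := by
        have hP : (C : Mat).det = 1 := C.property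
        rw [hCdec, det_combo htrG hdetG] at hP
        exact hP
      set σ : ℝ := if 0 ≤ a then 1 else -1 with hσdef
      have hσ2 : σ^2 = 1 := by
        by_cases hσ : 0 ≤ a <;> simp [hσdef, hσ]
      have hσa : 0 ≤ σ * a := by
        by_cases hσ : 0 ≤ a
        · simp [hσdef, hσ]
        · simp only [hσdef, if_neg hσ]
          push_neg at hσ
          nlinarith
      refine ⟨Real.arsinh (σ * b), ?_⟩
      have hcs : Real.cosh (Real.arsinh (σ * b)) = σ * a := by
        rw [Real.cosh_arsinh, show (1 : ℝ) + (σ*b)^2 = (σ*a)^2 by nlinarith [hσ2, hdetab]]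
        exact Real.sqrt_sq hσa
      have helG : (elG G htrG hdetG (Real.arsinh (σ * b)) : Mat) = σ • (C : Mat) := by
        rw [elG_coe, Real.sinh_arsinh, hcs, hCdec, smul_add, smul_smul, smul_smul]
      by_cases hσp : 0 ≤ a
      · have hσ1 : σ = 1 := if_pos hσp
        have : elG G htrG hdetG (Real.arsinh (σ * b)) = C :=
          Subtype.ext (by rw [helG, hσ1, one_smul])
        rw [this]
        exact hCx
      · have hσ1 : σ = -1 := if_neg hσp
        have : elG G htrG hdetG (Real.arsinh (σ * b)) = -C := by
          apply Subtype.ext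
          rw [helG, hσ1, Matrix.SpecialLinearGroup.coe_neg, neg_smul, one_smul]
        rw [this, mk_neg]
        exact hCx
    set k : ℕ → ℤ := fun n => round (s / t n) with hkdef
    have hkt : Tendsto (fun n => (k n : ℝ) * t n) atTop (𝓝 s) := by
      have hbd : ∀ n, |(k n : ℝ) * t n - s| ≤ |t n| * (1/2) := by
        intro n
        have h1 : (k n : ℝ) * t n - s = (s / t n - (round (s / t n) : ℝ)) * (-(t n)) := by
          rw [sub_mul, mul_neg, mul_neg, div_mul_cancel₀ s (htne n)]
          ring
        rw [h1, abs_mul, abs_neg, mul_comm]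
        exact mul_le_mul_of_nonneg_left (abs_sub_round _) (abs_nonneg _)
      have hbd' : ∀ n, |(k n : ℝ) * t n - s| ≤ |t n| := fun n =>
        (hbd n).trans (by nlinarith [abs_nonneg (t n)])
      have hsub : Tendsto (fun n => (k n : ℝ) * t n - s) atTop (𝓝 0) :=
        squeeze_zero_norm hbd' (by simpa using ht0.abs)
      have := hsub.add_const s
      simpa using this
    have hmatconv : Tendsto (fun n => ((B n ^ (k n) : SL2R) : Mat)) atTop
        (𝓝 ((elG G htrG hdetG s : SL2R) : Mat)) := by
      have hcoe : ∀ n, ((B n ^ (k n) : SL2R) : Mat) =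
          Real.cosh ((k n : ℝ) * t n) • 1 + Real.sinh ((k n : ℝ) * t n) • H n := by
        intro n
        rw [hBel n, elG_zpow, elG_coe]
      have hch : Tendsto (fun n => Real.cosh ((k n : ℝ) * t n)) atTop (𝓝 (Real.cosh s)) :=
        (Real.continuous_cosh.tendsto s).comp hkt
      have hsh : Tendsto (fun n => Real.sinh ((k n : ℝ) * t n)) atTop (𝓝 (Real.sinh s)) :=
        (Real.continuous_sinh.tendsto s).comp hkt
      have hmain : Tendsto (fun n => Real.cosh ((k n : ℝ) * t n) • (1 : Mat) +
          Real.sinh ((k n : ℝ) * t n) • H n) atTop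
          (𝓝 (Real.cosh s • (1 : Mat) + Real.sinh s • G)) :=
        (hch.smul tendsto_const_nhds).add (hsh.smul hHG)
      rw [elG_coe]
      exact hmain.congr (fun n => (hcoe n).symm)
    have hqconv : Tendsto (fun n => (QuotientGroup.mk (B n ^ k n) : PSL2R)) atTop (𝓝 x) := by
      rw [← hs]
      exact tendsto_mk_SL hmatconv
    filter_upwards [hqconv.eventually (Filter.eventually_of_mem (hU.mem_nhds hxU)
      fun y hy => hy)] with n hn
    refine ⟨QuotientGroup.mk (B n ^ k n), ?_, hn⟩
    apply subset_closure
    show QuotientGroup.mk (B n ^ k n) ∈ (Subgroup.zpowers (QuotientGroup.mk (A n) : PSL2R))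
    rw [QuotientGroup.mk_zpow, hBmk]
    exact Subgroup.zpow_mem_zpowers _ _
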